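/- arXiv:2202.06905 — 3 statements merged into one kernel-verified Lean document; each statement's English description precedes it below -/
import Mathlib

section
/- In the ring of germs at a point λ ∈ ℂⁿ of holomorphic functions, an ideal I is cofinite (i.e. the quotient Hol_λ/I is finite-dimensional over ℂ) if and only if there exists m ∈ ℕ₀ such that m_λ^{m+1} ⊆ I, where m_λ is the maximal ideal of germs vanishing at λ. -/
open Filter Topology NNReal

/-- The algebra of germs at a filter of `ℂ`-valued functions, as a `ℂ`-algebra. -/
noncomputable instance germComplexAlgebra {α : Type*} (l : Filter α) :
    Algebra ℂ (l.Germ ℂ) :=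
  Algebra.ofModule
    (fun c x y => by
      induction x using Filter.Germ.inductionOn with | _ f =>
      induction y using Filter.Germ.inductionOn with | _ g =>
      simp only [← Filter.Germ.coe_smul, ← Filter.Germ.coe_mul]
      congr 1
      exact smul_mul_assoc c f g)
    (fun c x y => by
      induction x using Filter.Germ.inductionOn with | _ f =>
      induction y using Filter.Germ.inductionOn with | _ g =>
      simp only [← Filter.Germ.coe_smul, ← Filter.Germ.coe_mul]
      congr 1
      exact mul_smul_comm c f g)

private lemma shift_summable {E : Type*} [NormedAddCommGroup E] [NormedSpace ℂ E]
    (p : FormalMultilinearSeries ℂ E ℂ) {t : ℝ≥0} (ht : (t:ENNReal) < p.radius) :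
    Summable (fun m : ℕ => ‖p (m+1)‖ * (t:ℝ)^m) := by
  rcases eq_or_lt_of_le (zero_le : (0:ℝ≥0) ≤ t) with h0 | h0
  · apply summable_of_ne_finset_zero (s := ({0} : Finset ℕ))
    intro m hm
    have ht0 : (t:ℝ) = 0 := by exact_mod_cast h0.symm
    simp [ht0, zero_pow (by simpa using hm)]
  · have hs := p.summable_norm_mul_pow ht
    have hs1 : Summable (fun m : ℕ => ‖p (m+1)‖ * (t:ℝ)^(m+1)) :=
      (_root_.summable_nat_add_iff (f := fun k : ℕ => ‖p k‖ * (t:ℝ)^k) 1).mpr hs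
    have := hs1.mul_right ((t:ℝ)⁻¹)
    apply this.congr
    intro m
    have htne : (t:ℝ) ≠ 0 := by exact_mod_cast h0.ne'
    field_simp [pow_succ]
    ring

theorem hadamard {n : ℕ} (z : Fin n → ℂ) (g : (Fin n → ℂ) → ℂ)
    (hg : AnalyticAt ℂ g z) (h0 : g z = 0) :
    ∃ h : Fin n → ((Fin n → ℂ) → ℂ), (∀ i, AnalyticAt ℂ (h i) z) ∧
      ∀ᶠ x in nhds z, g x = ∑ i, (x i - z i) * h i x := by
  obtain ⟨p, hp⟩ := hg
  obtain ⟨r, hpr⟩ := hp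
  set e : Fin n → (Fin n → ℂ) := fun i => Pi.single i 1 with he
  have he_norm : ∀ i, ‖e i‖ ≤ 1 := by
    intro i
    simp [he, Pi.norm_single]
  set q : Fin n → FormalMultilinearSeries ℂ (Fin n → ℂ) ℂ :=
    fun i m => (p (m+1)).curryLeft (e i) with hq
  have hq_norm : ∀ i m, ‖q i m‖ ≤ ‖p (m+1)‖ := by
    intro i m
    calc ‖q i m‖ ≤ ‖(p (m+1)).curryLeft‖ * ‖e i‖ := ContinuousLinearMap.le_opNorm _ _
    _ ≤ ‖p (m+1)‖ * 1 := by
        apply mul_le_mul _ (he_norm i) (norm_nonneg _) (norm_nonneg _)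
        simp [ContinuousMultilinearMap.curryLeft_norm]
    _ = ‖p (m+1)‖ := mul_one _
  have hq_rad : ∀ i, r ≤ (q i).radius := by
    intro i
    apply ENNReal.le_of_forall_nnreal_lt
    intro t htr
    apply FormalMultilinearSeries.le_radius_of_summable_norm
    have hb := shift_summable p (lt_of_lt_of_le htr hpr.r_le)
    apply Summable.of_nonneg_of_le (fun m => by positivity) _ hb
    intro m
    exact mul_le_mul_of_nonneg_right (hq_norm i m) (by positivity)
  set h : Fin n → ((Fin n → ℂ) → ℂ) := fun i x => (q i).sum (x - z) with hh
  have h_an : ∀ i, AnalyticAt ℂ (h i) z := by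
    intro i
    have hrad : 0 < (q i).radius := lt_of_lt_of_le hpr.r_pos (hq_rad i)
    have hsum_an : AnalyticAt ℂ (q i).sum 0 :=
      ((q i).hasFPowerSeriesOnBall hrad).analyticAt
    have hsub : AnalyticAt ℂ (fun x : Fin n → ℂ => x - z) z :=
      (analyticAt_id).sub analyticAt_const
    have hcomp : AnalyticAt ℂ ((q i).sum ∘ (fun x => x - z)) z := by
      apply AnalyticAt.comp _ hsub
      simpa using hsum_an
    exact hcomp
  refine ⟨h, h_an, ?_⟩
  have hball : EMetric.ball z r ∈ nhds z := EMetric.ball_mem_nhds z hpr.r_pos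
  filter_upwards [hball] with x hx
  set y : Fin n → ℂ := x - z with hy
  have hy0 : y ∈ EMetric.ball (0 : Fin n → ℂ) r := by
    exact mem_emetric_ball_zero_iff.2 (by rw [hy, ← edist_eq_enorm_sub]; exact hx)
  have hyn : (‖y‖₊ : ENNReal) < r := by
    exact mem_emetric_ball_zero_iff.1 hy0
  have hsumg : HasSum (fun k => p k (fun _ => y)) (g x) := by
    have := hpr.hasSum hy0
    simpa [hy] using this
  have hbound : ∀ i m, ‖q i m (fun _ => y)‖ ≤ ‖p (m+1)‖ * ‖y‖^m := by
    intro i m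
    calc ‖q i m (fun _ => y)‖ ≤ ‖q i m‖ * ∏ _j : Fin m, ‖y‖ :=
          ContinuousMultilinearMap.le_opNorm _ _
    _ = ‖q i m‖ * ‖y‖^m := by simp
    _ ≤ ‖p (m+1)‖ * ‖y‖^m := mul_le_mul_of_nonneg_right (hq_norm i m) (by positivity)
  have hbsumm : Summable (fun m => ‖p (m+1)‖ * ‖y‖^m) := by
    have := shift_summable p (lt_of_lt_of_le hyn hpr.r_le)
    simpa using this
  have hsummq : ∀ i, Summable (fun m => q i m (fun _ => y)) := fun i =>
    Summable.of_norm_bounded hbsumm (hbound i)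
  have h1 : (∑ i, y i • e i) = y := by
    funext j
    simp [he, Finset.sum_apply, Pi.single_apply, mul_ite]
  have key : ∀ m : ℕ, ∑ i, y i * q i m (fun _ => y) = p (m+1) (fun _ => y) := by
    intro m
    calc ∑ i, y i * q i m (fun _ => y)
        = ∑ i, ((p (m+1)).curryLeft (y i • e i)) (fun _ => y) := by
          refine Finset.sum_congr rfl fun i _ => ?_
          simp [hq, map_smul, ContinuousMultilinearMap.smul_apply, smul_eq_mul]
    _ = ((p (m+1)).curryLeft (∑ i, y i • e i)) (fun _ => y) := by
          rw [map_sum, ContinuousMultilinearMap.sum_apply]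
    _ = p (m+1) (fun _ => y) := by
          rw [h1, ContinuousMultilinearMap.curryLeft_apply]
          congr 1
          funext j
          refine Fin.cases ?_ ?_ j <;> simp
  calc g x = ∑' k, p k (fun _ => y) := hsumg.tsum_eq.symm
  _ = p 0 (fun _ => y) + ∑' m, p (m+1) (fun _ => y) := hsumg.summable.tsum_eq_zero_add
  _ = ∑' m, p (m+1) (fun _ => y) := by
        rw [hpr.hasFPowerSeriesAt.coeff_zero, h0, zero_add]
  _ = ∑' m, ∑ i, y i * q i m (fun _ => y) := (tsum_congr key).symm
  _ = ∑ i, ∑' m, y i * q i m (fun _ => y) :=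
        Summable.tsum_finsetSum (fun i _ => (hsummq i).mul_left (y i))
  _ = ∑ i, (x i - z i) * h i x := by
        refine Finset.sum_congr rfl fun i _ => ?_
        rw [show (∑' (m : ℕ), y i * (q i m) fun _ => y) = y i * ∑' (m : ℕ), (q i m) fun _ => y
          from (hsummq i).tsum_mul_left (y i)]
        rfl

private lemma nakayama_aux {R : Type*} [CommRing R] (J I : Ideal R) (k : ℕ)
    (hfg : (J ^ k).FG) (hjac : J ≤ Ideal.jacobson ⊥)
    (hstep : J ^ k ≤ J ^ (k + 1) ⊔ I) : J ^ k ≤ I := by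
  have hNak : Submodule.map (Submodule.mkQ I) (J ^ k) = ⊥ := by
    apply Submodule.eq_bot_of_le_smul_of_le_jacobson_bot J _ (Submodule.FG.map (Submodule.mkQ I) hfg) _ hjac
    have h1 : Submodule.map (Submodule.mkQ I) (J ^ k)
        ≤ Submodule.map (Submodule.mkQ I) (J ^ (k + 1) ⊔ I) := Submodule.map_mono hstep
    rw [Submodule.map_sup] at h1
    have h2 : Submodule.map (Submodule.mkQ I) I = ⊥ := by
      rw [← le_bot_iff, Submodule.map_le_iff_le_comap]
      intro x hx
      simp [Submodule.mem_comap, Submodule.Quotient.mk_eq_zero I, hx]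
    have h3 : J ^ (k + 1) = J • (J ^ k) := by rw [Ideal.smul_eq_mul, ← pow_succ']
    rw [h2, sup_bot_eq, h3, Submodule.map_smul''] at h1
    exact h1
  intro x hx
  have hmem : Submodule.mkQ I x ∈ (⊥ : Submodule R (R ⧸ I)) := by
    rw [← hNak]
    exact ⟨x, hx, rfl⟩
  rw [Submodule.mem_bot] at hmem
  exact (Submodule.Quotient.mk_eq_zero I).1 hmem

set_option synthInstance.maxHeartbeats 1000000 in
set_option maxHeartbeats 4000000 in
/-- In the local ring `Hol_λ` of germs at a point `λ ∈ ℂⁿ` of holomorphic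
functions, an ideal `I` is cofinite (i.e. `Hol_λ ⧸ I` is finite-dimensional over `ℂ`) if and
only if there exists `m ∈ ℕ` such that `m_λ^(m+1) ⊆ I`, where `m_λ` is the maximal ideal of
germs vanishing at `λ`. -/
theorem cofinite_ideal_iff_contains_power_of_maximal_ideal
    (n : ℕ) (z : Fin n → ℂ)
    (Hol : Subalgebra ℂ ((nhds z).Germ ℂ))
    (hHol : ∀ f : (nhds z).Germ ℂ,
      f ∈ Hol ↔ ∃ g : (Fin n → ℂ) → ℂ, AnalyticAt ℂ g z ∧ f = ↑g)
    (mz : Ideal Hol)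
    (hmz : ∀ f : Hol, f ∈ mz ↔ ∃ g : (Fin n → ℂ) → ℂ,
      AnalyticAt ℂ g z ∧ f.1 = ↑g ∧ g z = 0)
    (I : Ideal Hol) :
    FiniteDimensional ℂ (Hol ⧸ I) ↔ ∃ m : ℕ, mz ^ (m + 1) ≤ I := by
  classical
  have hcoord : ∀ i : Fin n, AnalyticAt ℂ (fun x : Fin n → ℂ => x i - z i) z := fun i =>
    ((ContinuousLinearMap.proj i : (Fin n → ℂ) →L[ℂ] ℂ).analyticAt z).sub analyticAt_const
  have hWmem : ∀ i, (↑(fun x : Fin n → ℂ => x i - z i) : (nhds z).Germ ℂ) ∈ Hol := fun i =>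
    (hHol _).2 ⟨_, hcoord i, rfl⟩
  set W : Fin n → Hol := fun i => ⟨_, hWmem i⟩ with hWdef
  have hWmz : ∀ i, W i ∈ mz := fun i => (hmz _).2 ⟨_, hcoord i, rfl, by simp⟩
  have hconst : ∀ c : ℂ, ((algebraMap ℂ Hol c : Hol) : (nhds z).Germ ℂ)
      = (↑(fun _ : Fin n → ℂ => c) : (nhds z).Germ ℂ) := by
    intro c
    have h1 : ((algebraMap ℂ Hol c : Hol) : (nhds z).Germ ℂ)
        = algebraMap ℂ ((nhds z).Germ ℂ) c := rfl
    rw [h1, Algebra.algebraMap_eq_smul_one, ← Filter.Germ.coe_one, ← Filter.Germ.coe_smul]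
    congr 1
    funext _
    simp
  have hdec : ∀ f : Hol, ∃ c : ℂ, f - algebraMap ℂ Hol c ∈ mz := by
    intro f
    obtain ⟨g, hg, hfg⟩ := (hHol f.1).1 f.2
    refine ⟨g z, (hmz _).2 ⟨fun x => g x - g z, hg.sub analyticAt_const, ?_, by simp⟩⟩
    have h2 : ((f - algebraMap ℂ Hol (g z) : Hol) : (nhds z).Germ ℂ)
        = f.1 - ((algebraMap ℂ Hol (g z) : Hol) : (nhds z).Germ ℂ) := rfl
    rw [h2, hfg, hconst, ← Filter.Germ.coe_sub]
    rfl
  have hspan : Ideal.span (Set.range W) = mz := by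
    refine le_antisymm (Ideal.span_le.2 ?_) ?_
    · rintro _ ⟨i, rfl⟩
      exact hWmz i
    · intro f hf
      obtain ⟨g, hg, hfg, hgz⟩ := (hmz f).1 hf
      obtain ⟨h, h_an, h_eq⟩ := hadamard z g hg hgz
      have hHmem : ∀ i, (↑(h i) : (nhds z).Germ ℂ) ∈ Hol := fun i =>
        (hHol _).2 ⟨h i, h_an i, rfl⟩
      set H : Fin n → Hol := fun i => ⟨_, hHmem i⟩ with hHdef
      have hfH : f = ∑ i, W i * H i := by
        apply Subtype.ext
        rw [hfg]
        have h2 : ((∑ i, W i * H i : Hol) : (nhds z).Germ ℂ)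
            = (↑(fun x => ∑ i, (x i - z i) * h i x) : (nhds z).Germ ℂ) := by
          rw [show ((∑ i, W i * H i : Hol) : (nhds z).Germ ℂ)
              = ∑ i, ((W i : (nhds z).Germ ℂ) * (H i : (nhds z).Germ ℂ)) from
            map_sum Hol.val (fun i => W i * H i) Finset.univ]
          rw [show (fun x => ∑ i, (x i - z i) * h i x)
              = ∑ i, ((fun x : Fin n → ℂ => x i - z i) * h i) from funext fun x => by
            simp [Finset.sum_apply]]
          rw [show (↑(∑ i, ((fun x : Fin n → ℂ => x i - z i) * h i)) : (nhds z).Germ ℂ)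
              = ∑ i, (↑((fun x : Fin n → ℂ => x i - z i) * h i) : (nhds z).Germ ℂ) from
            map_sum (Filter.Germ.coeRingHom (nhds z)) _ Finset.univ]
          refine Finset.sum_congr rfl fun i _ => ?_
          rw [← Filter.Germ.coe_mul]
        rw [h2]
        exact Filter.Germ.coe_eq.2 h_eq
      rw [hfH]
      exact Ideal.sum_mem _ fun i _ =>
        Ideal.mul_mem_right _ _ (Ideal.subset_span ⟨i, rfl⟩)
  have hjac : mz ≤ Ideal.jacobson ⊥ := by
    intro u hu
    rw [Ideal.mem_jacobson_bot]
    intro v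
    obtain ⟨g, hg, hg1, hg0⟩ := (hmz (u * v)).1 (Ideal.mul_mem_right _ _ hu)
    have hg1' : AnalyticAt ℂ (fun x => g x + 1) z := hg.add analyticAt_const
    have hne : g z + 1 ≠ 0 := by simp [hg0]
    have hinv : AnalyticAt ℂ (fun x => (g x + 1)⁻¹) z := hg1'.inv hne
    have hmemInv : (↑(fun x => (g x + 1)⁻¹) : (nhds z).Germ ℂ) ∈ Hol :=
      (hHol _).2 ⟨_, hinv, rfl⟩
    refine IsUnit.of_mul_eq_one ⟨_, hmemInv⟩ ?_
    apply Subtype.ext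
    have hcoe : ((u * v + 1 : Hol) : (nhds z).Germ ℂ)
        = (↑(fun x => g x + 1) : (nhds z).Germ ℂ) := by
      have : ((u * v + 1 : Hol) : (nhds z).Germ ℂ)
          = ((u * v : Hol) : (nhds z).Germ ℂ) + 1 := rfl
      rw [this, hg1, ← Filter.Germ.coe_one, ← Filter.Germ.coe_add]
      rfl
    have hgoal : ((u * v + 1 : Hol) : (nhds z).Germ ℂ)
        * (↑(fun x => (g x + 1)⁻¹) : (nhds z).Germ ℂ) = 1 := by
      rw [hcoe, ← Filter.Germ.coe_mul, ← Filter.Germ.coe_one]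
      apply Filter.Germ.coe_eq.2
      have hev : ∀ᶠ x in nhds z, g x + 1 ≠ 0 :=
        hg1'.continuousAt.eventually_ne hne
      filter_upwards [hev] with x hx
      exact mul_inv_cancel₀ hx
    exact hgoal
  set T : ℕ → Set Hol := fun k =>
    {g : Hol | ∃ l : List (Fin n), l.length = k + 1 ∧ g = (l.map W).prod} with hTdef
  have hpow : ∀ k, mz ^ (k + 1) = Ideal.span (T k) := by
    intro k
    induction k with
    | zero =>
      rw [pow_one, ← hspan]
      congr 1
      ext g
      constructor
      · rintro ⟨i, rfl⟩
        exact ⟨[i], rfl, by simp⟩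
      · rintro ⟨l, hl, rfl⟩
        match l, hl with
        | [i], _ => exact ⟨i, by simp⟩
    | succ k ih =>
      rw [pow_succ, mul_comm, ih, ← hspan, Ideal.span_mul_span]
      congr 1
      ext g
      simp only [Set.mem_mul]
      constructor
      · rintro ⟨a, ha, b, hb, rfl⟩
        obtain ⟨i, rfl⟩ := ha
        obtain ⟨l, hl, rfl⟩ := hb
        exact ⟨i :: l, by simp [hl], by simp⟩
      · rintro ⟨l, hl, rfl⟩
        match l, hl with
        | i :: l', hl =>
          exact ⟨W i, ⟨i, rfl⟩, (l'.map W).prod, ⟨l', by simpa using hl, rfl⟩, by simp⟩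
  set T' : ℕ → Set Hol := fun k =>
    {g : Hol | ∃ l : List (Fin n), l.length ≤ k ∧ g = (l.map W).prod} with hT'def
  have hT'fin : ∀ k, (T' k).Finite := by
    intro k
    have hsub : T' k ⊆ (fun l : List (Fin n) => (l.map W).prod) '' {l | l.length ≤ k} := by
      rintro g ⟨l, hl, rfl⟩
      exact ⟨l, hl, rfl⟩
    exact ((List.finite_length_le (Fin n) k).image _).subset hsub
  have hdecomp : ∀ k (f : Hol), f ∈ Submodule.span ℂ (T' k)
      ⊔ Submodule.restrictScalars ℂ (mz ^ (k + 1) : Ideal Hol) := by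
    intro k
    induction k with
    | zero =>
      intro f
      obtain ⟨c, hc⟩ := hdec f
      have h1 : (algebraMap ℂ Hol c : Hol) ∈ Submodule.span ℂ (T' 0) := by
        have hone : (1 : Hol) ∈ T' 0 := ⟨[], by simp, by simp⟩
        have := Submodule.smul_mem (Submodule.span ℂ (T' 0)) c (Submodule.subset_span hone)
        rwa [Algebra.algebraMap_eq_smul_one]
      refine Submodule.mem_sup.2 ⟨_, h1, f - algebraMap ℂ Hol c, ?_, by ring⟩
      simpa [pow_one] using hc
    | succ k ih =>
      intro f
      obtain ⟨d, hd, p', hp', rfl⟩ := Submodule.mem_sup.1 (ih f)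
      have hdmem : d ∈ Submodule.span ℂ (T' (k + 1)) := by
        refine Submodule.span_mono ?_ hd
        rintro g ⟨l, hl, rfl⟩
        exact ⟨l, hl.trans (Nat.le_succ _), rfl⟩
      have hp'' : p' ∈ Ideal.span (T k) := by
        rw [← hpow k]
        exact hp'
      rw [Ideal.span, Submodule.mem_span_set] at hp''
      obtain ⟨c, hcsupp, hcs⟩ := hp''
      have hterm : ∀ t ∈ c.support, c t • t ∈ Submodule.span ℂ (T' (k + 1))
          ⊔ Submodule.restrictScalars ℂ (mz ^ (k + 2) : Ideal Hol) := by
        intro t ht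
        obtain ⟨s, hs⟩ := hdec (c t)
        have htT : t ∈ T k := hcsupp ht
        have h1 : s • t ∈ Submodule.span ℂ (T' (k + 1)) := by
          apply Submodule.smul_mem
          apply Submodule.subset_span
          obtain ⟨l, hl, rfl⟩ := htT
          exact ⟨l, le_of_eq hl, rfl⟩
        have h2 : (c t - algebraMap ℂ Hol s) * t ∈ (mz ^ (k + 2) : Ideal Hol) := by
          have hmul := Ideal.mul_mem_mul hs
            (show t ∈ mz ^ (k + 1) by rw [hpow k]; exact Ideal.subset_span htT)
          rwa [← pow_succ'] at hmul
        have hsplit : c t • t = s • t + (c t - algebraMap ℂ Hol s) * t := by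
          rw [smul_eq_mul, Algebra.smul_def]
          ring
        rw [hsplit]
        exact Submodule.add_mem _ (Submodule.mem_sup_left h1) (Submodule.mem_sup_right h2)
      have hsum : p' ∈ Submodule.span ℂ (T' (k + 1))
          ⊔ Submodule.restrictScalars ℂ (mz ^ (k + 2) : Ideal Hol) := by
        rw [← hcs, Finsupp.sum]
        exact Submodule.sum_mem _ hterm
      exact Submodule.add_mem _ (Submodule.mem_sup_left hdmem) hsum
  constructor
  · intro hFD
    set π := Ideal.Quotient.mkₐ ℂ I with hπdef
    set N : ℕ → Submodule ℂ (Hol ⧸ I) := fun k =>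
      Submodule.map π.toLinearMap
        (Submodule.restrictScalars ℂ (mz ^ k : Ideal Hol)) with hNdef
    have hNanti : ∀ k, N (k + 1) ≤ N k := by
      intro k
      apply Submodule.map_mono
      intro x hx
      exact Ideal.pow_le_pow_right (Nat.le_succ k) hx
    have hstab : ∃ k, N (k + 1) = N k := by
      by_contra hcon
      push_neg at hcon
      have hlt : ∀ k, Module.finrank ℂ (N (k + 1)) < Module.finrank ℂ (N k) := fun k =>
        Submodule.finrank_lt_finrank_of_lt (lt_of_le_of_ne (hNanti k) (hcon k))
      have hchain : ∀ k, Module.finrank ℂ (N k) + k ≤ Module.finrank ℂ (N 0) := by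
        intro k
        induction k with
        | zero => simp
        | succ k ihk =>
          have := hlt k
          omega
      have := hchain (Module.finrank ℂ (N 0) + 1)
      omega
    obtain ⟨k, hk⟩ := hstab
    have hstep : (mz ^ k : Ideal Hol) ≤ mz ^ (k + 1) ⊔ I := by
      intro x hx
      have hx' : π x ∈ N (k + 1) := by
        rw [hk]
        exact ⟨x, hx, rfl⟩
      obtain ⟨y, hy, hyx⟩ := hx'
      have hxy : x - y ∈ I := by
        have : Ideal.Quotient.mk I y = Ideal.Quotient.mk I x := by
          rw [← Ideal.Quotient.mkₐ_eq_mk ℂ I]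
          exact hyx
        have h4 := Submodule.neg_mem I (Ideal.Quotient.eq.1 this)
        rwa [neg_sub] at h4
      exact Submodule.mem_sup.2 ⟨y, hy, x - y, hxy, by ring⟩
    have hfg : (mz ^ k : Ideal Hol).FG := by
      have hmzfg : mz.FG := by
        rw [← hspan]
        exact Submodule.fg_span (Set.finite_range W)
      exact Submodule.FG.pow hmzfg k
    have hfinal : (mz ^ k : Ideal Hol) ≤ I := nakayama_aux mz I k hfg hjac hstep
    exact ⟨k, le_trans (Ideal.pow_le_pow_right (Nat.le_succ k)) hfinal⟩
  · rintro ⟨m, hm⟩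
    set π := Ideal.Quotient.mkₐ ℂ I with hπdef
    have hsurj : Function.Surjective π := Ideal.Quotient.mkₐ_surjective ℂ I
    have htop : (⊤ : Submodule ℂ (Hol ⧸ I)) ≤ Submodule.span ℂ (π '' T' m) := by
      intro x _
      obtain ⟨f, rfl⟩ := hsurj x
      obtain ⟨d, hd, p', hp', rfl⟩ := Submodule.mem_sup.1 (hdecomp m f)
      have hp0 : π p' = 0 := by
        rw [hπdef, Ideal.Quotient.mkₐ_eq_mk]
        exact Ideal.Quotient.eq_zero_iff_mem.2 (hm hp')
      rw [map_add, hp0, add_zero]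
      exact Submodule.apply_mem_span_image_of_mem_span π.toLinearMap hd
    refine ⟨⟨((hT'fin m).image π).toFinset, ?_⟩⟩
    apply le_antisymm le_top
    rw [Set.Finite.coe_toFinset]
    exact htop
end

section
/- Symbol of an invariant differential operator on the exponential functions: if Q is a G-invariant linear differential operator from sections of 𝔼_{τ̃} to sections of 𝔼_{γ̃}, then Q e^τ_{λ,k} = (Q e^τ_{λ,1})(1) ∘ e^γ_{λ,k} for all λ ∈ 𝔞*_ℂ and k ∈ K; in particular applying Q to e^τ_{λ,k} multiplies it by a fixed endomorphism-valued factor independent of k and g. -/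
/-- **symbol of an invariant differential operator on exponentials.**
If `Q` is a `G`-invariant linear operator from (E_τ-tensored) sections of `𝔼_{τ̃}` to
sections of `𝔼_{γ̃}`, then `Q e^τ_{λ,k} = (Q e^τ_{λ,1})(1) ∘ e^γ_{λ,k}` for all `k ∈ K`;
in particular applying `Q` to `e^τ_{λ,k}` multiplies it by a fixed endomorphism-valued
factor independent of `k` and `g`.

Setting: `G = KAN`; `Q` commutes with all left translations; sections of `𝔼_{τ̃} ⊗ E_τ`
are modelled as functions `G → End(E_τ)` with right equivariance `f(gk) = f(g) ∘ τ(k)`,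
and they are mapped by `Q` to functions `G → Hom(E_γ, E_τ)` with
`(Qf)(gk) = (Qf)(g) ∘ γ(k)`; `e^τ_{λ,k}(g) = τ(κ(g⁻¹k))⁻¹ a(g⁻¹k)^{-(λ+ρ)}` with the
`A`-character `a^{-(λ+ρ)}` modelled by `χ : G → ℂ`, and similarly `e^γ_{λ,k}`. -/
theorem invariant_operator_on_exponential_functions
    {G Eτ Eγ : Type*} [Group G]
    [AddCommGroup Eτ] [Module ℂ Eτ] [AddCommGroup Eγ] [Module ℂ Eγ]
    (K A N : Subgroup G)
    (κ a n : G → G)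
    (hκ : ∀ g, κ g ∈ K) (ha : ∀ g, a g ∈ A) (hn : ∀ g, n g ∈ N)
    (hdec : ∀ g, g = κ g * a g * n g)
    (huniq : ∀ g k x m, k ∈ K → x ∈ A → m ∈ N → g = k * x * m →
      k = κ g ∧ x = a g ∧ m = n g)
    (hnorm : ∀ x ∈ A, ∀ m ∈ N, x * m * x⁻¹ ∈ N)
    (τ : G →* (Module.End ℂ Eτ)ˣ) (γ : G →* (Module.End ℂ Eγ)ˣ)
    (χ : G → ℂ) (hχ : ∀ x ∈ A, ∀ y ∈ A, χ (x * y) = χ x * χ y)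
    (eτ : G → G → Module.End ℂ Eτ)
    (heτ : ∀ k g, eτ k g =
      χ (a (g⁻¹ * k)) • ((τ (κ (g⁻¹ * k)))⁻¹ : (Module.End ℂ Eτ)ˣ))
    (eγ : G → G → Module.End ℂ Eγ)
    (heγ : ∀ k g, eγ k g =
      χ (a (g⁻¹ * k)) • ((γ (κ (g⁻¹ * k)))⁻¹ : (Module.End ℂ Eγ)ˣ))
    (Q : (G → Module.End ℂ Eτ) →ₗ[ℂ] (G → (Eγ →ₗ[ℂ] Eτ)))
    (hQinv : ∀ (h : G) (f : G → Module.End ℂ Eτ),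
      Q (fun x => f (h * x)) = fun x => Q f (h * x))
    (hQequiv : ∀ f : G → Module.End ℂ Eτ,
      (∀ g, ∀ k ∈ K, f (g * k) = f g * (τ k : Module.End ℂ Eτ)) →
      ∀ g, ∀ k ∈ K, Q f (g * k) = (Q f g) ∘ₗ (γ k : Module.End ℂ Eγ)) :
    ∀ k ∈ K, ∀ g : G, Q (eτ k) g = (Q (eτ 1) 1) ∘ₗ (eγ k g) := by

  -- Left K-translation facts for the Iwasawa projections.
  have hK : ∀ k' ∈ K, ∀ x : G, κ (k' * x) = k' * κ x ∧ a (k' * x) = a x := by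
    intro k' hk' x
    obtain ⟨h1, h2, _⟩ := huniq (k' * x) (k' * κ x) (a x) (n x)
      (K.mul_mem hk' (hκ x)) (ha x) (hn x) (by rw [mul_assoc, mul_assoc, ← mul_assoc (κ x)]; exact congrArg (k' * ·) (hdec x))
    exact ⟨h1.symm, h2.symm⟩
  -- Right AN-translation facts.
  have hAN : ∀ (y : G) (a₀ n₀ : G), a₀ ∈ A → n₀ ∈ N →
      κ (y * a₀ * n₀) = κ y ∧ a (y * a₀ * n₀) = a y * a₀ := by
    intro y a₀ n₀ ha₀ hn₀
    obtain ⟨h1, h2, _⟩ := huniq (y * a₀ * n₀) (κ y) (a y * a₀)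
      (a₀⁻¹ * n y * a₀ * n₀) (hκ y) (A.mul_mem (ha y) ha₀)
      (N.mul_mem (by simpa using hnorm a₀⁻¹ (A.inv_mem ha₀) (n y) (hn y)) hn₀)
      (by conv_lhs => rw [hdec y]
          group)
    exact ⟨h1.symm, h2.symm⟩
  have f1 := eτ 1
  -- eτ k is the left translate of eτ 1
  have step1 : ∀ k : G, eτ k = fun x => eτ 1 (k⁻¹ * x) := by
    intro k; funext x
    rw [heτ, heτ]
    simp [mul_inv_rev]
  have stepγ : ∀ k g : G, eγ 1 (k⁻¹ * g) = eγ k g := by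
    intro k g
    rw [heγ, heγ]
    simp [mul_inv_rev]
  -- right K-equivariance of eτ 1
  have hEq : ∀ g', ∀ k' ∈ K, eτ 1 (g' * k') = eτ 1 g' * (τ k' : Module.End ℂ Eτ) := by
    intro g' k' hk'
    rw [heτ, heτ]
    have h := hK k'⁻¹ (K.inv_mem hk') g'⁻¹
    rw [mul_one, mul_one, mul_inv_rev, h.1, h.2]
    rw [smul_mul_assoc]
    congr 1
    have : (τ (k'⁻¹ * κ g'⁻¹))⁻¹ = (τ (κ g'⁻¹))⁻¹ * τ k' := by
      rw [map_mul, mul_inv_rev, map_inv, inv_inv]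
    rw [this, Units.val_mul]
  -- main claim: Q (eτ 1) h = Q (eτ 1) 1 ∘ₗ eγ 1 h
  have main : ∀ h : G, Q (eτ 1) h = Q (eτ 1) 1 ∘ₗ eγ 1 h := by
    intro h
    set a₀ := a h⁻¹ with ha₀def
    set n₀ := n h⁻¹ with hn₀def
    set k₀ := κ h⁻¹ with hk₀def
    have hh : h = (n₀⁻¹ * a₀⁻¹) * k₀⁻¹ := by
      have := hdec h⁻¹
      rw [← hk₀def, ← ha₀def, ← hn₀def] at this
      rw [← inv_inv h, this]; group
    set p := n₀⁻¹ * a₀⁻¹ with hpdef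
    -- eigenfunction property
    have heig : (fun x => eτ 1 (p * x)) = χ a₀ • eτ 1 := by
      funext x
      have hinv : (p * x)⁻¹ * 1 = x⁻¹ * a₀ * n₀ := by rw [hpdef]; group
      have h2 := hAN x⁻¹ a₀ n₀ (ha _) (hn _)
      rw [heτ, hinv, h2.1, h2.2, hχ _ (ha _) _ (ha _)]
      simp only [Pi.smul_apply, heτ, mul_one, smul_smul]
      ring_nf
      rfl
    have hQp : Q (eτ 1) p = χ a₀ • Q (eτ 1) 1 := by
      have := hQinv p (eτ 1)
      rw [heig, map_smul] at this
      have := congrFun this 1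
      rw [mul_one] at this
      simpa using this.symm
    have hQh : Q (eτ 1) h = (χ a₀ • Q (eτ 1) 1) ∘ₗ (γ k₀⁻¹ : Module.End ℂ Eγ) := by
      conv_lhs => rw [hh]
      rw [hQequiv (eτ 1) hEq p k₀⁻¹ (K.inv_mem (hκ _)), hQp]
    rw [hQh, heγ, mul_one]
    have hγ : ((γ (κ h⁻¹))⁻¹ : (Module.End ℂ Eγ)ˣ) = γ k₀⁻¹ := by rw [map_inv]
    rw [hγ]
    ext v
    simp
    rfl
  intro k hk g
  have := congrFun (hQinv k⁻¹ (eτ 1)) g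
  rw [← step1 k] at this
  rw [this, main, stepγ]
end

section
/- The strong dual of a Fréchet–Montel space is bornological: if E is a Fréchet space that is Montel, then its strong dual E'_β is a bornological locally convex space, i.e., every seminorm on E'_β that is bounded on bounded sets is continuous. -/
open Bornology

section AuxiliaryLemmas

open Set Filter Topology Pointwise

variable {E : Type*} [AddCommGroup E] [Module ℝ E] [UniformSpace E] [IsUniformAddGroup E]
  [ContinuousSMul ℝ E]

/-- Every neighborhood of `0` in a locally convex TVS contains a closed, convex, balanced
neighborhood of `0`. -/
lemma aux_exists_closed_absconvex_nhd [LocallyConvexSpace ℝ E] {W : Set E}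
    (hW : W ∈ 𝓝 (0 : E)) :
    ∃ A : Set E, A ∈ 𝓝 (0 : E) ∧ IsClosed A ∧ Convex ℝ A ∧ Balanced ℝ A ∧ A ⊆ W := by
  obtain ⟨C, hC, hCc, hCW⟩ := exists_mem_nhds_isClosed_subset hW
  obtain ⟨A, ⟨hA, hAb, hAc⟩, hAC⟩ := (nhds_hasBasis_absConvex ℝ E).mem_iff.1 hC
  exact ⟨closure A, mem_of_superset hA subset_closure, isClosed_closure, hAc.closure,
    hAb.closure, (closure_minimal hAC hCc).trans hCW⟩

/-- A first countable locally convex TVS has a countable family of closed, convex, balanced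
neighborhoods of `0` which form a basis of neighborhoods of `0`. -/
lemma aux_exists_basis [FirstCountableTopology E] [LocallyConvexSpace ℝ E] :
    ∃ V : ℕ → Set E, (∀ n, V n ∈ 𝓝 (0 : E) ∧ IsClosed (V n) ∧ Convex ℝ (V n) ∧
      Balanced ℝ (V n)) ∧ ∀ W ∈ 𝓝 (0 : E), ∃ n, V n ⊆ W := by
  obtain ⟨b, hb⟩ := (𝓝 (0 : E)).exists_antitone_basis
  choose V hV1 hV2 hV3 hV4 hV5 using fun n => aux_exists_closed_absconvex_nhd (hb.mem n)
  exact ⟨V, fun n => ⟨hV1 n, hV2 n, hV3 n, hV4 n⟩, fun W hW => by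
    obtain ⟨n, -, hn⟩ := hb.toHasBasis.mem_iff.1 hW
    exact ⟨n, (hV5 n).trans hn⟩⟩

/-- The polar of a neighborhood of `0` is von Neumann bounded in the strong dual. -/
lemma aux_polar_nhd_bounded {V : Set E} (hV : V ∈ 𝓝 (0 : E)) :
    IsVonNBounded ℝ {T : E →L[ℝ] ℝ | ∀ x ∈ V, |T x| ≤ 1} := by
  intro N hN
  obtain ⟨⟨S, V'⟩, ⟨hS, hV'⟩, hsub⟩ := (ContinuousLinearMap.hasBasis_nhds_zero).mem_iff.1 hN
  obtain ⟨ε, hε, hball⟩ := Metric.mem_nhds_iff.1 hV'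
  obtain ⟨r, hr, hrS⟩ := (hS hV).exists_pos
  rw [absorbs_iff_norm]
  refine ⟨2 * r / ε, fun c hc => fun T hT => ?_⟩
  have hrε : (0:ℝ) < 2 * r / ε := by positivity
  have hc0 : c ≠ 0 := by
    intro h; rw [h, norm_zero] at hc; linarith
  rw [Set.mem_smul_set_iff_inv_smul_mem₀ hc0]
  refine hsub ?_
  intro x hx
  have hxS : x ∈ r • V := hrS r (by simp [Real.norm_eq_abs, abs_of_pos hr]) hx
  obtain ⟨y, hy, rfl⟩ := hxS
  have hTy : |T y| ≤ 1 := hT y hy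
  have : |(c⁻¹ • T) (r • y)| = r * |T y| / ‖c‖ := by
    simp only [ContinuousLinearMap.smul_apply, map_smul, smul_eq_mul, abs_mul, abs_inv,
      Real.norm_eq_abs, abs_of_pos hr]
    ring
  refine hball ?_
  simp only [Metric.mem_ball, Real.dist_eq, sub_zero]
  calc |(c⁻¹ • T) (r • y)| = r * |T y| / ‖c‖ := this
    _ ≤ r * 1 / (2 * r / ε) := by
        apply div_le_div₀ (by positivity) (by nlinarith [abs_nonneg (T y)]) hrε hc
    _ = ε / 2 := by field_simp
    _ < ε := by linarith

/-- The key compactness (Montel) argument: if a continuous linear functional is bounded by `1`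
on the intersection of a sequence of closed sets, each scaled copy of which eventually absorbs
every neighborhood requirement, then it is bounded by `2` on some finite sub-intersection. -/
lemma aux_claim1 [FirstCountableTopology E]
    (hHB : ∀ s : Set E, IsVonNBounded ℝ s → IsCompact (closure s))
    (U : ℕ → Set E) (hcl : ∀ n, IsClosed (U n))
    (habs : ∀ W ∈ 𝓝 (0 : E), ∃ n, Absorbs ℝ W (U n))
    (T : E →L[ℝ] ℝ) (hT : ∀ x ∈ ⋂ n, U n, |T x| ≤ 1) :
    ∃ M, ∀ x, (∀ n < M, x ∈ U n) → |T x| ≤ 2 := by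
  by_contra h
  push_neg at h
  choose x hx1 hx2 using h
  have hbd : IsVonNBounded ℝ (Set.range x) := by
    intro W hW
    obtain ⟨n, hn⟩ := habs W hW
    have hsub : Set.range x ⊆ (x '' Iio (n + 1)) ∪ U n := by
      rintro _ ⟨M, rfl⟩
      rcases lt_or_ge M (n + 1) with hM | hM
      · exact Or.inl ⟨M, hM, rfl⟩
      · exact Or.inr (hx1 M n (by omega))
    refine Absorbs.mono_right ?_ hsub
    refine Absorbs.union ?_ hn
    have : IsVonNBounded ℝ (⋃ M ∈ Iio (n + 1), {x M}) :=
      (isVonNBounded_biUnion (Set.finite_Iio _)).2 fun i _ => isVonNBounded_singleton _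
    have himg : (x '' Iio (n + 1)) = ⋃ M ∈ Iio (n + 1), {x M} := by
      ext y; simp [eq_comm]
    rw [himg]
    exact this hW
  have hcpt := hHB _ hbd
  obtain ⟨a, _, φ, hφ, hconv⟩ := hcpt.isSeqCompact fun M => subset_closure (mem_range_self M)
  have haU : ∀ n, a ∈ U n := by
    intro n
    refine (hcl n).mem_of_tendsto hconv ?_
    filter_upwards [eventually_ge_atTop (n + 1)] with j hj
    exact hx1 (φ j) n (by have := hφ.le_apply (x := j); omega)
  have h1 : |T a| ≤ 1 := hT a (mem_iInter.2 haU)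
  have h2 : (2:ℝ) ≤ |T a| := by
    have : Tendsto (fun j => |T (x (φ j))|) atTop (𝓝 |T a|) :=
      ((T.continuous.tendsto a).comp hconv).abs
    exact le_of_tendsto_of_tendsto' tendsto_const_nhds this fun j => (hx2 (φ j)).le
  linarith

/-- The Hahn–Banach decomposition: a continuous linear functional bounded on the intersection
of finitely many convex balanced neighborhoods of `0` decomposes as a sum of linear functionals,
each bounded on the corresponding neighborhood. -/
lemma aux_decompose (M : ℕ) (hM : 0 < M) (U : Fin M → Set E)
    (hUnh : ∀ i, U i ∈ 𝓝 (0 : E)) (hUc : ∀ i, Convex ℝ (U i)) (hUb : ∀ i, Balanced ℝ (U i))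
    (T : E →L[ℝ] ℝ) (c : ℝ) (hc : 0 ≤ c)
    (hT : ∀ x, (∀ i, x ∈ U i) → |T x| ≤ c) :
    ∃ g : Fin M → (E →ₗ[ℝ] ℝ), (∀ x, ∑ i, g i x = T x) ∧ ∀ i, ∀ x ∈ U i, |g i x| ≤ c := by
  classical
  set 𝒰 : Set (Fin M → E) := Set.pi univ U with h𝒰
  have h𝒰nh : 𝒰 ∈ 𝓝 (0 : Fin M → E) := set_pi_mem_nhds finite_univ (fun i _ => hUnh i)
  have habs : Absorbent ℝ 𝒰 := absorbent_nhds_zero h𝒰nh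
  have hconv : Convex ℝ 𝒰 := convex_pi fun i _ => hUc i
  have hsymm : ∀ v ∈ 𝒰, -v ∈ 𝒰 := by
    intro v hv i _
    have : (-1 : ℝ) • v i ∈ U i := hUb i (-1) (by norm_num) ⟨v i, hv i trivial, rfl⟩
    simpa using this
  set diag : E →ₗ[ℝ] (Fin M → E) := LinearMap.pi (fun _ => LinearMap.id) with hdiag
  set N : (Fin M → E) → ℝ := fun v => c * gauge 𝒰 v with hN
  have key : ∀ (x : E) (r : ℝ), 0 < r → diag x ∈ r • 𝒰 → |T x| ≤ c * r := by
    intro x r hr hmem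
    rw [Set.mem_smul_set_iff_inv_smul_mem₀ (ne_of_gt hr)] at hmem
    have hmem' : ∀ i, r⁻¹ • x ∈ U i := by
      intro i
      have := hmem i trivial
      simpa [hdiag] using this
    have h1 : |T (r⁻¹ • x)| ≤ c := hT _ hmem'
    have h2 : T x = r * T (r⁻¹ • x) := by
      rw [map_smul, smul_eq_mul, ← mul_assoc, mul_inv_cancel₀ (ne_of_gt hr), one_mul]
    rw [h2, abs_mul, abs_of_pos hr]
    calc r * |T (r⁻¹ • x)| ≤ r * c := by nlinarith
      _ = c * r := mul_comm _ _
  have hdom : ∀ x : E, |T x| ≤ c * gauge 𝒰 (diag x) := by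
    intro x
    refine le_of_forall_pos_le_add ?_
    intro ε hε
    obtain ⟨b, hb0, hbl, hbm⟩ :=
      exists_lt_of_gauge_lt habs
        (lt_add_of_pos_right (gauge 𝒰 (diag x)) (show (0:ℝ) < ε / (c + 1) by positivity))
    calc |T x| ≤ c * b := key x b hb0 hbm
      _ ≤ c * (gauge 𝒰 (diag x) + ε / (c + 1)) := by nlinarith
      _ ≤ c * gauge 𝒰 (diag x) + ε := by
          have : c * (ε / (c + 1)) ≤ ε := by
            rw [div_eq_inv_mul, ← mul_assoc]
            have h1 : c * (c + 1)⁻¹ ≤ 1 := by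
              rw [mul_inv_le_iff₀ (by linarith)]; linarith
            nlinarith
          linarith [mul_add c (gauge 𝒰 (diag x)) (ε / (c + 1))]
  have N_hom : ∀ r : ℝ, 0 < r → ∀ v, N (r • v) = r * N v := by
    intro r hr v
    rw [hN]
    simp only [gauge_smul_of_nonneg hr.le, smul_eq_mul]
    ring
  have N_add : ∀ v w, N (v + w) ≤ N v + N w := by
    intro v w
    have := gauge_add_le hconv habs v w
    simp only [hN, ← mul_add]
    exact mul_le_mul_of_nonneg_left this hc
  set f : (Fin M → E) →ₗ.[ℝ] ℝ :=
    ⟨LinearMap.range diag,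
      T.toLinearMap ∘ₗ (LinearMap.proj ⟨0, hM⟩) ∘ₗ (LinearMap.range diag).subtype⟩ with hf
  have hfdom : ∀ v : f.domain, f v ≤ N v := by
    rintro ⟨v, x, rfl⟩
    have h1 : f ⟨diag x, ⟨x, rfl⟩⟩ = T x := rfl
    rw [h1]
    exact (le_abs_self _).trans (hdom x)
  obtain ⟨g, hg1, hg2⟩ := exists_extension_of_le_sublinear f N N_hom N_add hfdom
  have hgabs : ∀ v, |g v| ≤ N v := by
    intro v
    rw [abs_le]
    constructor
    · have h1 : g (-v) ≤ N (-v) := hg2 (-v)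
      have h2 : N (-v) = N v := by
        simp only [hN]
        rw [gauge_neg hsymm]
      simp only [map_neg] at h1
      linarith [h2 ▸ h1]
    · exact hg2 v
  refine ⟨fun i => g ∘ₗ LinearMap.single ℝ (fun _ => E) i, ?_, ?_⟩
  · intro x
    have hsum : (∑ i, Pi.single i x : Fin M → E) = diag x := by
      have := Finset.univ_sum_single (fun _ => x : Fin M → E)
      rw [show diag x = fun _ => x from rfl]
      simpa using this
    calc ∑ i, (g ∘ₗ LinearMap.single ℝ (fun _ => E) i) x
        = g (∑ i, Pi.single i x) := by
          rw [map_sum]; rfl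
      _ = g (diag x) := by rw [hsum]
      _ = f ⟨diag x, ⟨x, rfl⟩⟩ := (hg1 ⟨diag x, ⟨x, rfl⟩⟩)
      _ = T x := rfl
  · intro i x hx
    have hmem : (Pi.single i x : Fin M → E) ∈ 𝒰 := by
      intro j _
      rcases eq_or_ne j i with rfl | hji
      · simpa using hx
      · have : (Pi.single i x : Fin M → E) j = 0 := by simp [Pi.single_apply, hji]
        rw [this]
        exact mem_of_mem_nhds (hUnh j)
    have : |g (Pi.single i x)| ≤ N (Pi.single i x) := hgabs _
    have hle : N (Pi.single i x) ≤ c := by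
      calc N (Pi.single i x) = c * gauge 𝒰 (Pi.single i x) := rfl
        _ ≤ c * 1 := mul_le_mul_of_nonneg_left (gauge_le_one_of_mem hmem) hc
        _ = c := mul_one c
    exact le_trans (by simpa using this) hle

end AuxiliaryLemmas

/-- The strong dual of a Fréchet–Montel space is bornological: if `E` is a
Fréchet space (complete, metrizable locally convex space) which is Montel (barrelled with the
Heine–Borel property), then every seminorm on its strong dual `E'_β = (E →L[ℝ] ℝ)` (with
the topology of uniform convergence on bounded sets) that is bounded on bounded sets is
continuous. -/
theorem strong_dual_frechet_montel_bornological
    {E : Type*}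
    [AddCommGroup E] [Module ℝ E] [UniformSpace E] [IsUniformAddGroup E]
    [CompleteSpace E] [FirstCountableTopology E]
    [ContinuousSMul ℝ E] [LocallyConvexSpace ℝ E] [BarrelledSpace ℝ E]
    (hHeineBorel : ∀ s : Set E, IsVonNBounded ℝ s → IsCompact (closure s))
    (p : Seminorm ℝ (E →L[ℝ] ℝ))
    (hp : ∀ B : Set (E →L[ℝ] ℝ), IsVonNBounded ℝ B → ∃ C : ℝ, ∀ T ∈ B, p T ≤ C) :
    Continuous p := by
  classical
  open Set Filter Topology Pointwise in
  obtain ⟨V, hV, hVbasis⟩ := aux_exists_basis (E := E)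
  have hpol : ∀ n, IsVonNBounded ℝ {T : E →L[ℝ] ℝ | ∀ x ∈ V n, |T x| ≤ 1} :=
    fun n => aux_polar_nhd_bounded (hV n).1
  choose C' hC' using fun n => hp _ (hpol n)
  set C : ℕ → ℝ := fun n => max (C' n) 1 with hC
  have hCone : ∀ n, 1 ≤ C n := fun n => le_max_right _ _
  have hCpos : ∀ n, 0 < C n := fun n => lt_of_lt_of_le one_pos (hCone n)
  have hCbound : ∀ n (T : E →L[ℝ] ℝ), (∀ x ∈ V n, |T x| ≤ 1) → p T ≤ C n :=
    fun n T hT => (hC' n T hT).trans (le_max_left _ _)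
  set κ : ℕ → ℝ := fun n => 2 ^ (n + 1) * C n with hκ
  have hκpos : ∀ n, 0 < κ n := fun n => by positivity
  set U : ℕ → Set E := fun n => κ n • V n with hU
  have hUnh : ∀ n, U n ∈ 𝓝 (0 : E) := by
    intro n
    have := smul_mem_nhds_smul₀ (c := κ n) (ne_of_gt (hκpos n)) (hV n).1
    simpa using this
  have hUcl : ∀ n, IsClosed (U n) := fun n => (hV n).2.1.smul_of_ne_zero (ne_of_gt (hκpos n))
  have hUconv : ∀ n, Convex ℝ (U n) := fun n => (hV n).2.2.1.smul _
  have hUbal : ∀ n, Balanced ℝ (U n) := fun n => (hV n).2.2.2.smul _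
  have habs : ∀ W ∈ 𝓝 (0 : E), ∃ n, Absorbs ℝ W (U n) := by
    intro W hW
    obtain ⟨n, hn⟩ := hVbasis W hW
    refine ⟨n, absorbs_iff_norm.2 ⟨κ n, fun c hc u hu => ?_⟩⟩
    obtain ⟨v, hv, rfl⟩ := hu
    have hc0 : c ≠ 0 := by
      intro h; rw [h, norm_zero] at hc; exact absurd hc (not_le.2 (hκpos n))
    rw [Set.mem_smul_set_iff_inv_smul_mem₀ hc0]
    refine hn ?_
    have : (c⁻¹ * κ n) • v ∈ V n := by
      refine (hV n).2.2.2 (c⁻¹ * κ n) ?_ ⟨v, hv, rfl⟩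
      rw [norm_mul, norm_inv]
      calc ‖c‖⁻¹ * ‖κ n‖ ≤ ‖c‖⁻¹ * ‖c‖ := by
            have h1 : (0:ℝ) ≤ ‖c‖⁻¹ := by positivity
            exact mul_le_mul_of_nonneg_left (le_trans (by
              simp [Real.norm_eq_abs, abs_of_pos (hκpos n)]) hc) h1
        _ = 1 := inv_mul_cancel₀ (by simpa using hc0)
    simpa [smul_smul] using this
  set B : Set E := ⋂ n, U n with hB
  have hBbd : IsVonNBounded ℝ B := by
    intro W hW
    obtain ⟨n, hn⟩ := habs W hW
    exact hn.mono_right (Set.iInter_subset U n)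
  have h𝒩 : {T : E →L[ℝ] ℝ | ∀ x ∈ B, |T x| ≤ 1} ∈ 𝓝 (0 : E →L[ℝ] ℝ) := by
    refine (ContinuousLinearMap.hasBasis_nhds_zero).mem_iff.2
      ⟨(B, Metric.closedBall 0 1), ⟨hBbd, Metric.closedBall_mem_nhds 0 one_pos⟩, ?_⟩
    intro T hT x hx
    simpa [Real.dist_eq] using hT x hx
  have hkey : ∀ T : E →L[ℝ] ℝ, (∀ x ∈ B, |T x| ≤ 1) → p T ≤ 2 := by
    intro T hT
    obtain ⟨M₀, hM₀⟩ := aux_claim1 hHeineBorel U hUcl habs T hT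
    set M : ℕ := M₀ + 1 with hM
    obtain ⟨g, hgsum, hgbd⟩ := aux_decompose M (Nat.succ_pos _) (fun i : Fin M => U i)
      (fun i => hUnh i) (fun i => hUconv i) (fun i => hUbal i) T 2 (by norm_num)
      (fun x hx => hM₀ x (fun n hn => hx ⟨n, by omega⟩))
    have hgsc : ∀ (i : Fin M) (y : E), y ∈ V (i : ℕ) → |g i y| ≤ 2 / κ (i : ℕ) := by
      intro i y hy
      have h1 : κ (i : ℕ) • y ∈ U (i : ℕ) := ⟨y, hy, rfl⟩
      have h2 : |g i (κ (i : ℕ) • y)| ≤ 2 := hgbd i _ h1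
      rw [map_smul, smul_eq_mul, abs_mul, abs_of_pos (hκpos _)] at h2
      rw [le_div_iff₀ (hκpos _), mul_comm]
      exact h2
    have hcont : ∀ i : Fin M, Continuous (g i) := by
      intro i
      have hca : ContinuousAt (g i) 0 := by
        rw [ContinuousAt, map_zero, Metric.tendsto_nhds]
        intro ε hε
        have hsm : (ε / 4) • U (i:ℕ) ∈ 𝓝 (0 : E) := by
          have := smul_mem_nhds_smul₀ (c := ε / 4) (by positivity) (hUnh (i:ℕ))
          simpa using this
        filter_upwards [hsm] with x hx
        obtain ⟨u, hu, rfl⟩ := hx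
        have h2 : |g i u| ≤ 2 := hgbd i _ hu
        rw [Real.dist_eq, sub_zero, map_smul, smul_eq_mul, abs_mul,
          abs_of_pos (show (0:ℝ) < ε / 4 by positivity)]
        calc ε / 4 * |g i u| ≤ ε / 4 * 2 := mul_le_mul_of_nonneg_left h2 (by positivity)
          _ = ε / 2 := by ring
          _ < ε := by linarith
      exact continuous_of_continuousAt_zero (g i).toAddMonoidHom hca
    set G : Fin M → (E →L[ℝ] ℝ) := fun i => ⟨g i, hcont i⟩ with hG
    have hTG : T = ∑ i, G i := by
      ext x
      have := hgsum x
      simp only [ContinuousLinearMap.coe_sum', Finset.sum_apply]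
      exact this.symm
    have hpGi : ∀ i : Fin M, p (G i) ≤ (1/2 : ℝ) ^ (i : ℕ) := by
      intro i
      have hS : p ((κ (i:ℕ) / 2) • G i) ≤ C (i:ℕ) := by
        refine hCbound (i:ℕ) _ ?_
        intro x hx
        have h3 := hgsc i x hx
        have h4 : ((κ (i:ℕ) / 2) • G i) x = (κ (i:ℕ) / 2) * g i x := rfl
        rw [h4, abs_mul, abs_of_pos (by positivity : (0:ℝ) < κ (i:ℕ) / 2)]
        calc κ (i:ℕ)/2 * |g i x| ≤ κ (i:ℕ)/2 * (2/κ (i:ℕ)) :=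
              mul_le_mul_of_nonneg_left h3 (by positivity)
          _ = 1 := by field_simp; exact div_self (hκpos _).ne'
      have hGi : G i = (2 / κ (i:ℕ)) • ((κ (i:ℕ)/2) • G i) := by
        rw [smul_smul]
        have : (2 / κ (i:ℕ)) * (κ (i:ℕ)/2) = 1 := by
          field_simp; exact div_self (hκpos _).ne'
        rw [this, one_smul]
      calc p (G i) = ‖(2 / κ (i:ℕ))‖ * p ((κ (i:ℕ)/2) • G i) := by
            conv_lhs => rw [hGi]
            exact map_smul_eq_mul p _ _
        _ ≤ (2 / κ (i:ℕ)) * C (i:ℕ) := by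
            rw [Real.norm_eq_abs, abs_of_pos (by positivity : (0:ℝ) < 2 / κ (i:ℕ))]
            exact mul_le_mul_of_nonneg_left hS (by positivity)
        _ = (1/2 : ℝ) ^ (i : ℕ) := by
            rw [hκ]
            have hc0 := (hCpos (i:ℕ)).ne'
            field_simp [pow_succ]
            rw [pow_succ, mul_right_comm, ← mul_pow]; norm_num
    calc p T = p (∑ i, G i) := by rw [← hTG]
      _ ≤ ∑ i, p (G i) :=
          Finset.le_sum_of_subadditive p (map_zero p).le (map_add_le_add p) _ _
      _ ≤ ∑ i : Fin M, (1/2:ℝ)^(i:ℕ) := Finset.sum_le_sum (fun i _ => hpGi i)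
      _ = ∑ i ∈ Finset.range M, (1/2:ℝ)^i := Fin.sum_univ_eq_sum_range _ _
      _ ≤ 2 := sum_geometric_two_le M
  have hball : p.closedBall 0 2 ∈ 𝓝 (0 : E →L[ℝ] ℝ) := by
    refine Filter.mem_of_superset h𝒩 (fun T hT => ?_)
    rw [Seminorm.mem_closedBall_zero]
    exact hkey T hT
  exact Seminorm.continuous' hball
end
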